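/- Hermite–Hadamard inequality III: Let α ∈ (0,1], 0 ≤ a < b, f : [a,b] → ℝ be α-fractional differentiable with D_α f continuous and m ≤ D_α f(t) ≤ M on [a,b]. Then |(f(a) + f(b))/2 − (α/(b^α − a^α))·∫_a^b f(s) s^{α−1} ds| ≤ (1/4)·((b^α − a^α)/α)·(M − m). -/

import Mathlib

open Set MeasureTheory intervalIntegral

noncomputable def condD (α : ℝ) (f : ℝ → ℝ) : ℝ → ℝ :=
  fun t => t ^ (1 - α) * deriv f t

lemma trapezoid (A B m' M' : ℝ) (hAB : A < B) (g g' : ℝ → ℝ)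
    (hg : ∀ u ∈ Icc A B, HasDerivAt g (g' u) u)
    (hg'c : ContinuousOn g' (Icc A B))
    (hbd : ∀ u ∈ Icc A B, m' ≤ g' u ∧ g' u ≤ M') :
    |(g A + g B) / 2 - (1 / (B - A)) * ∫ u in A..B, g u| ≤
      (1 / 4) * (B - A) * (M' - m') := by
  have hABle : A ≤ B := hAB.le
  have hABne : B - A ≠ 0 := sub_ne_zero.mpr hAB.ne'
  have hirw : Icc A B = uIcc A B := (uIcc_of_le hABle).symm
  set c : ℝ := (A + B) / 2 with hc
  set γ : ℝ := (m' + M') / 2 with hγ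
  have hgc : ContinuousOn g (Icc A B) := fun x hx => (hg x hx).continuousAt.continuousWithinAt
  have hint_g : IntervalIntegrable g volume A B := by
    rw [hirw] at hgc; exact hgc.intervalIntegrable
  have hint_g' : IntervalIntegrable g' volume A B := by
    rw [hirw] at hg'c; exact hg'c.intervalIntegrable
  have hint_lin : IntervalIntegrable (fun u => u - c) volume A B :=
    ((continuous_id.sub continuous_const)).intervalIntegrable A B
  have hint_mul : IntervalIntegrable (fun u => (u - c) * g' u) volume A B := by
    rw [hirw] at hg'c
    exact (continuous_id.sub continuous_const).continuousOn.mul hg'c |>.intervalIntegrable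
  -- ∫ (u - c) du = 0
  have hzero : (∫ u in A..B, (u - c)) = 0 := by
    rw [integral_sub intervalIntegrable_id intervalIntegrable_const,
      integral_id, intervalIntegral.integral_const, smul_eq_mul, hc]
    ring
  -- integration by parts
  have hIBP : (∫ u in A..B, (u - c) * g' u)
      = (B - c) * g B - (A - c) * g A - ∫ u in A..B, g u := by
    have := integral_mul_deriv_eq_deriv_mul_of_hasDerivAt
      (u := fun u => u - c) (v := g) (u' := fun _ => (1 : ℝ)) (v' := g')
      (by fun_prop)
      (by rw [← hirw]; exact hgc)
      (fun x hx => (hasDerivAt_id x).sub_const c)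
      (fun x hx => hg x (by
        rw [min_eq_left hABle, max_eq_right hABle] at hx
        exact Ioo_subset_Icc_self hx))
      (continuous_const.intervalIntegrable A B)
      hint_g'
    rw [this]
    simp [one_mul]
  have hT : (∫ u in A..B, (u - c) * (g' u - γ))
      = (B - A) * ((g A + g B) / 2 - (1 / (B - A)) * ∫ u in A..B, g u) := by
    have expand : (∫ u in A..B, (u - c) * (g' u - γ))
        = (∫ u in A..B, (u - c) * g' u) - γ * ∫ u in A..B, (u - c) := by
      rw [← intervalIntegral.integral_const_mul]
      rw [← integral_sub hint_mul (by
        exact (continuous_const.mul (continuous_id.sub continuous_const)).intervalIntegrable A B)]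
      congr 1; ext u; ring
    rw [expand, hzero, hIBP]
    have h1 : B - c = (B - A) / 2 := by rw [hc]; ring
    have h2 : A - c = -((B - A) / 2) := by rw [hc]; ring
    rw [h1, h2]
    field_simp
    ring
  -- bound the integral
  have hbound : |∫ u in A..B, (u - c) * (g' u - γ)|
      ≤ ((B - A) / 2) * ((M' - m') / 2) * |B - A| := by
    rw [← Real.norm_eq_abs]
    apply intervalIntegral.norm_integral_le_of_norm_le_const
    intro x hx
    rw [uIoc_of_le hABle] at hx
    have hx' : x ∈ Icc A B := Ioc_subset_Icc_self hx
    have h1 : |x - c| ≤ (B - A) / 2 := by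
      rw [abs_le, hc]; constructor <;> linarith [hx'.1, hx'.2]
    have h2 : |g' x - γ| ≤ (M' - m') / 2 := by
      rw [abs_le, hγ]; constructor <;> linarith [(hbd x hx').1, (hbd x hx').2]
    rw [Real.norm_eq_abs, abs_mul]
    exact mul_le_mul h1 h2 (abs_nonneg _) (by linarith)
  rw [hT] at hbound
  rw [abs_mul, abs_of_pos (by linarith : (0:ℝ) < B - A)] at hbound
  have hBA : 0 < B - A := by linarith
  nlinarith [hbound]

/-- Hermite–Hadamard inequality III for conformable derivatives. -/
theorem hermite_hadamard_III (α a b m M : ℝ) (hα : 0 < α ∧ α ≤ 1)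
    (ha : 0 ≤ a) (hab : a < b) (f : ℝ → ℝ)
    (hdiff : ∀ x ∈ Icc a b, DifferentiableAt ℝ f x)
    (hcont : ContinuousOn (condD α f) (Icc a b))
    (hbd : ∀ t ∈ Icc a b, m ≤ condD α f t ∧ condD α f t ≤ M) :
    |(f a + f b) / 2 - (α / (b ^ α - a ^ α)) * ∫ s in a..b, f s * s ^ (α - 1)| ≤
      (1 / 4) * ((b ^ α - a ^ α) / α) * (M - m) := by
  obtain ⟨hα0, hα1⟩ := hα
  have hαne : α ≠ 0 := hα0.ne'
  set p : ℝ := 1 / α with hpdef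
  have hp0 : 0 < p := by positivity
  have hp1 : 1 ≤ p := by rw [hpdef, le_div_iff₀ hα0]; linarith
  have hαp : α * p = 1 := by rw [hpdef]; field_simp
  set A : ℝ := a ^ α with hAdef
  set B : ℝ := b ^ α with hBdef
  have hA0 : 0 ≤ A := Real.rpow_nonneg ha α
  have hb0 : 0 ≤ b := le_of_lt (lt_of_le_of_lt ha hab)
  have hAB : A < B := Real.rpow_lt_rpow ha hab hα0
  have haA : A ^ p = a := by rw [hAdef, ← Real.rpow_mul ha, hαp, Real.rpow_one]
  have hbB : B ^ p = b := by rw [hBdef, ← Real.rpow_mul hb0, hαp, Real.rpow_one]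
  set g : ℝ → ℝ := fun u => f (u ^ p) with hgdef
  set G : ℝ → ℝ := fun u => p * condD α f (u ^ p) with hGdef
  -- mapping
  have hψmem : ∀ u ∈ Icc A B, u ^ p ∈ Icc a b := by
    intro u hu
    have hu0 : 0 ≤ u := le_trans hA0 hu.1
    constructor
    · rw [← haA]; exact Real.rpow_le_rpow hA0 hu.1 hp0.le
    · rw [← hbB]; exact Real.rpow_le_rpow hu0 hu.2 hp0.le
  have hψc : Continuous fun u : ℝ => u ^ p :=
    continuous_iff_continuousAt.mpr fun x =>
      Real.continuousAt_rpow_const x p (Or.inr hp0.le)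
  have hfc : ContinuousOn f (Icc a b) := fun x hx =>
    (hdiff x hx).continuousAt.continuousWithinAt
  have hgc : ContinuousOn g (Icc A B) :=
    hfc.comp hψc.continuousOn hψmem
  -- derivative of g
  have hg : ∀ u ∈ Icc A B, HasDerivAt g (G u) u := by
    intro u hu
    have hu0 : 0 ≤ u := le_trans hA0 hu.1
    have hs : u ^ p ∈ Icc a b := hψmem u hu
    have hd1 : HasDerivAt (fun x : ℝ => x ^ p) (p * u ^ (p - 1)) u :=
      Real.hasDerivAt_rpow_const (Or.inr hp1)
    have hd2 : HasDerivAt f (deriv f (u ^ p)) (u ^ p) := (hdiff _ hs).hasDerivAt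
    have h3 : HasDerivAt g (deriv f (u ^ p) * (p * u ^ (p - 1))) u := hd2.comp u hd1
    have hexp : p * (1 - α) = p - 1 := by
      rw [mul_sub, mul_one, mul_comm p α, hαp]
    have hval : G u = deriv f (u ^ p) * (p * u ^ (p - 1)) := by
      rw [hGdef]
      simp only [condD]
      rw [← Real.rpow_mul hu0, hexp]
      ring
    rw [hval]
    exact h3
  -- continuity of G
  have hGc : ContinuousOn G (Icc A B) :=
    continuousOn_const.mul (hcont.comp hψc.continuousOn hψmem)
  -- bounds on G
  have hGbd : ∀ u ∈ Icc A B, p * m ≤ G u ∧ G u ≤ p * M := by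
    intro u hu
    obtain ⟨h1, h2⟩ := hbd (u ^ p) (hψmem u hu)
    exact ⟨mul_le_mul_of_nonneg_left h1 hp0.le, mul_le_mul_of_nonneg_left h2 hp0.le⟩
  -- trapezoid inequality
  have key := trapezoid A B (p * m) (p * M) hAB g G hg hGc hGbd
  -- change of variables
  have hchg : (∫ u in A..B, g u) = α * ∫ s in a..b, f s * s ^ (α - 1) := by
    have huIcc : uIcc a b = Icc a b := uIcc_of_le hab.le
    have hφcont : Continuous (fun x : ℝ => x ^ α) :=
      continuous_iff_continuousAt.mpr fun x =>
        Real.continuousAt_rpow_const x α (Or.inr hα0.le)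
    have hφc : ContinuousOn (fun x : ℝ => x ^ α) (uIcc a b) := hφcont.continuousOn
    have himg : ∀ x ∈ Icc a b, x ^ α ∈ Icc A B := fun x hx =>
      ⟨Real.rpow_le_rpow ha hx.1 hα0.le, Real.rpow_le_rpow (le_trans ha hx.1) hx.2 hα0.le⟩
    have hgφc : ContinuousOn (g ∘ fun x : ℝ => x ^ α) (uIcc a b) := by
      rw [huIcc]
      exact hgc.comp hφcont.continuousOn himg
    have hint : IntervalIntegrable (fun x : ℝ => (g ∘ fun x : ℝ => x ^ α) x * (α * x ^ (α - 1)))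
        volume a b := by
      have hrpow : IntervalIntegrable (fun x : ℝ => x ^ (α - 1)) volume a b :=
        intervalIntegral.intervalIntegrable_rpow' (by linarith)
      exact (hrpow.const_mul α).continuousOn_mul hgφc
    have hcov := intervalIntegral.integral_comp_mul_deriv'''
      (a := a) (b := b) (f := fun x : ℝ => x ^ α)
      (f' := fun x : ℝ => α * x ^ (α - 1)) (g := g)
      hφc
      (by
        intro x hx
        rw [min_eq_left hab.le, max_eq_right hab.le] at hx
        have hx0 : x ≠ 0 := ne_of_gt (lt_of_le_of_lt ha hx.1)
        exact (Real.hasDerivAt_rpow_const (Or.inl hx0)).hasDerivWithinAt)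
      (by
        rw [min_eq_left hab.le, max_eq_right hab.le]
        refine hgc.mono ?_
        rintro _ ⟨x, hx, rfl⟩
        exact himg x (Ioo_subset_Icc_self hx))
      (by
        refine (hgc.integrableOn_Icc).mono_set ?_
        rw [huIcc]
        rintro _ ⟨x, hx, rfl⟩
        exact himg x hx)
      (by rwa [intervalIntegrable_iff'] at hint)
    rw [← hcov]
    rw [← intervalIntegral.integral_const_mul]
    apply intervalIntegral.integral_congr
    intro x hx
    rw [huIcc] at hx
    have hx0 : (0:ℝ) ≤ x := le_trans ha hx.1
    simp only [Function.comp]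
    rw [hgdef]
    simp only []
    rw [← Real.rpow_mul hx0, hαp, Real.rpow_one]
    ring
  -- assemble
  have hgA : g A = f a := by rw [hgdef]; simp only []; rw [haA]
  have hgB : g B = f b := by rw [hgdef]; simp only []; rw [hbB]
  rw [hgA, hgB, hchg] at key
  have hΔ : B - A ≠ 0 := sub_ne_zero.mpr hAB.ne'
  have e1 : (f a + f b) / 2 - α / (B - A) * ∫ s in a..b, f s * s ^ (α - 1)
      = (f a + f b) / 2 - 1 / (B - A) * (α * ∫ s in a..b, f s * s ^ (α - 1)) := by
    ring
  have e2 : 1 / 4 * ((B - A) / α) * (M - m) = 1 / 4 * (B - A) * (p * M - p * m) := by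
    rw [hpdef]; field_simp
  rw [e1, e2]
  exact key
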